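/- arXiv:2104.05826 — 2 statements merged into one kernel-verified Lean document; each statement's English description precedes it below -/
import Mathlib

section
/- Let (Xₙ)ₙ be a sequence of càdlàg processes on [0,∞) and define C̃ₙ(t) = (1/γₙ)·Cₙ(⌊αₙt⌋), where Cₙ(h) = Σ_{j=0}^h Zₙ(j), Zₙ(h+1) = Xₙ(Cₙ(h)), Cₙ(−1) = 0, αₙ → ∞, and 0 ≤ C̃ₙ(t) ≤ 1 for all t. Then for all 0 ≤ s < t, C̃ₙ(t) − C̃ₙ(s) ≤ (t − s + 2/αₙ)·‖X̃ₙ‖, where X̃ₙ(t) = (αₙ/γₙ)Xₙ(γₙt) and ‖f‖ = sup_{t∈[0,1]}|f(t)|. Consequently, the modulus w'_N(C̃ₙ; δ) ≤ 2(δ + 1/αₙ)·‖X̃ₙ‖ for all δ > 0 and integers N. -/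
open Set Filter

/-- A function which is right-continuous with left limits is bounded on compact intervals. -/
lemma cadlag_bdd_aux (X : ℝ → ℝ)
    (hX_rc : ∀ t, ContinuousWithinAt X (Ici t) t)
    (hX_ll : ∀ t, ∃ l, Tendsto X (nhdsWithin t (Iio t)) (nhds l))
    (a b : ℝ) : ∃ K, ∀ x ∈ Icc a b, |X x| ≤ K := by
  have hcomp : IsCompact (Icc a b) := isCompact_Icc
  have : ∃ K, ∀ x ∈ Icc a b, |X x| ≤ K := by
    refine hcomp.induction_on (p := fun s => ∃ K, ∀ x ∈ s, |X x| ≤ K) ⟨0, by simp⟩ ?_ ?_ ?_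
    · rintro s t hst ⟨K, hK⟩
      exact ⟨K, fun x hx => hK x (hst hx)⟩
    · rintro s t ⟨K1, h1⟩ ⟨K2, h2⟩
      exact ⟨max K1 K2, fun x hx => hx.elim
        (fun h => (h1 x h).trans (le_max_left _ _))
        (fun h => (h2 x h).trans (le_max_right _ _))⟩
    · intro x hx
      obtain ⟨l, hl⟩ := hX_ll x
      have h1 : ∀ᶠ y in nhdsWithin x (Ici x), |X y| ≤ max (|X x| + 1) (|l| + 1) := by
        have h := (hX_rc x).tendsto (Metric.ball_mem_nhds (X x) one_pos)
        filter_upwards [h] with y hy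
        simp only [mem_preimage, Metric.mem_ball, Real.dist_eq] at hy
        have : |X y| ≤ |X x| + 1 := by
          calc |X y| = |X y - X x + X x| := by ring_nf
            _ ≤ |X y - X x| + |X x| := abs_add_le _ _
            _ ≤ |X x| + 1 := by linarith
        exact this.trans (le_max_left _ _)
      have h2 : ∀ᶠ y in nhdsWithin x (Iio x), |X y| ≤ max (|X x| + 1) (|l| + 1) := by
        have h := hl (Metric.ball_mem_nhds l one_pos)
        filter_upwards [h] with y hy
        simp only [mem_preimage, Metric.mem_ball, Real.dist_eq] at hy
        have : |X y| ≤ |l| + 1 := by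
          calc |X y| = |X y - l + l| := by ring_nf
            _ ≤ |X y - l| + |l| := abs_add_le _ _
            _ ≤ |l| + 1 := by linarith
        exact this.trans (le_max_right _ _)
      have hmem : {y : ℝ | |X y| ≤ max (|X x| + 1) (|l| + 1)} ∈ nhds x := by
        rw [← nhdsLT_sup_nhdsGE x, mem_sup]
        exact ⟨h2, h1⟩
      exact ⟨{y : ℝ | |X y| ≤ max (|X x| + 1) (|l| + 1)},
        mem_nhdsWithin_of_mem_nhds hmem, max (|X x| + 1) (|l| + 1), fun y hy => hy⟩
  exact this

/-- The deterministic increment bound in the tightness proof: if `Z` solves the discrete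
Lamperti equation driven by a càdlàg `X` and the rescaled cumulative profile `C̃` stays in
`[0,1]`, then `C̃(t) - C̃(s) ≤ (t - s + 2/α)‖X̃‖`, and consequently the Skorokhod modulus
`w'_N(C̃; δ)` is bounded by `2(δ + 1/α)‖X̃‖` (witnessed by a partition with mesh `> δ`). -/
theorem stmt14
    (X : ℝ → ℝ)
    (hX_rc : ∀ t, ContinuousWithinAt X (Ici t) t)
    (hX_ll : ∀ t, ∃ l, Tendsto X (nhdsWithin t (Iio t)) (nhds l))
    (Z C : ℕ → ℝ) (αn γn : ℝ) (hα : 0 < αn) (hγ : 0 < γn)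
    (hC : ∀ h : ℕ, C h = ∑ j ∈ Finset.range (h + 1), Z j)
    (hZ : ∀ h : ℕ, Z (h + 1) = X (C h))
    (hZ0 : Z 0 = X 0)
    (hbound : ∀ t : ℝ, 0 ≤ t →
      0 ≤ (1 / γn) * C (⌊αn * t⌋₊) ∧ (1 / γn) * C (⌊αn * t⌋₊) ≤ 1)
    (M : ℝ) (hM : M = sSup ((fun t => |(αn / γn) * X (γn * t)|) '' Icc 0 1)) :
    (∀ s t : ℝ, 0 ≤ s → s < t →
      (1 / γn) * C (⌊αn * t⌋₊) - (1 / γn) * C (⌊αn * s⌋₊) ≤ (t - s + 2 / αn) * M) ∧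
    (∀ δ : ℝ, 0 < δ → ∀ N : ℕ, 0 < N →
      ∃ (v : ℕ) (ts : ℕ → ℝ), 0 < v ∧ ts 0 = 0 ∧ ts v = N ∧
        (∀ i, i + 1 ≤ v → ts i < ts (i + 1)) ∧
        (∀ i, i + 1 < v → δ < ts (i + 1) - ts i) ∧
        (∀ i, i + 1 ≤ v → ∀ s ∈ Ico (ts i) (ts (i + 1)), ∀ u ∈ Ico (ts i) (ts (i + 1)),
          |(1 / γn) * C (⌊αn * u⌋₊) - (1 / γn) * C (⌊αn * s⌋₊)| ≤
            2 * (δ + 1 / αn) * M)) := by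
  -- the sup defining M is over a nonempty bounded set
  have hbdd : BddAbove ((fun t => |(αn / γn) * X (γn * t)|) '' Icc 0 1) := by
    obtain ⟨K, hK⟩ := cadlag_bdd_aux X hX_rc hX_ll 0 γn
    refine ⟨(αn / γn) * K, ?_⟩
    rintro y ⟨r, hr, rfl⟩
    have h1 : γn * r ∈ Icc (0:ℝ) γn := by
      constructor
      · exact mul_nonneg hγ.le hr.1
      · nlinarith [hr.2]
    have h2 := hK (γn * r) h1
    have h3 : (0:ℝ) < αn / γn := div_pos hα hγ
    show |αn / γn * X (γn * r)| ≤ αn / γn * K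
    rw [abs_mul, abs_of_pos h3]
    exact mul_le_mul_of_nonneg_left h2 h3.le
  have hMmem : ∀ r : ℝ, r ∈ Icc (0:ℝ) 1 → |(αn / γn) * X (γn * r)| ≤ M := by
    intro r hr
    rw [hM]
    exact le_csSup hbdd ⟨r, hr, rfl⟩
  have hM0 : 0 ≤ M := le_trans (abs_nonneg _) (hMmem 0 ⟨le_refl _, zero_le_one⟩)
  -- each C h lies in [0, γn]
  have hCh : ∀ h : ℕ, 0 ≤ C h ∧ C h ≤ γn := by
    intro h
    have hnn : (0:ℝ) ≤ (h : ℝ) / αn := div_nonneg (Nat.cast_nonneg h) hα.le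
    have he : αn * ((h : ℝ) / αn) = (h : ℝ) := by field_simp
    have := hbound ((h : ℝ) / αn) hnn
    rw [he, Nat.floor_natCast] at this
    have key : C h = γn * (1 / γn * C h) := by field_simp
    constructor
    · rw [key]; exact mul_nonneg hγ.le this.1
    · rw [key]
      calc γn * (1 / γn * C h) ≤ γn * 1 := mul_le_mul_of_nonneg_left this.2 hγ.le
        _ = γn := mul_one γn
  -- each driving increment is bounded
  have hXCabs : ∀ h : ℕ, |X (C h)| ≤ γn / αn * M := by
    intro h
    have hc := hCh h
    have hr : C h / γn ∈ Icc (0:ℝ) 1 := by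
      constructor
      · exact div_nonneg hc.1 hγ.le
      · rw [div_le_one hγ]; exact hc.2
    have he : γn * (C h / γn) = C h := by field_simp
    have h1 := hMmem _ hr
    rw [he, abs_mul, abs_of_pos (div_pos hα hγ)] at h1
    calc |X (C h)| = γn / αn * (αn / γn * |X (C h)|) := by field_simp
      _ ≤ γn / αn * M := mul_le_mul_of_nonneg_left h1 (div_pos hγ hα).le
  -- absolute increment bound
  have habs : ∀ s t : ℝ, 0 ≤ s → s < t →
      |(1 / γn) * C (⌊αn * t⌋₊) - (1 / γn) * C (⌊αn * s⌋₊)| ≤ (t - s + 2 / αn) * M := by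
    intro s t hs hst
    set a := ⌊αn * s⌋₊ with ha
    set b := ⌊αn * t⌋₊ with hb
    have hab : a ≤ b := Nat.floor_le_floor (by nlinarith)
    have hsum : C b - C a = ∑ j ∈ Finset.Ico (a + 1) (b + 1), Z j := by
      rw [hC, hC, Finset.range_eq_Ico, Finset.range_eq_Ico,
        ← Finset.sum_Ico_consecutive Z (Nat.zero_le (a + 1)) (by omega : a + 1 ≤ b + 1)]
      ring
    have hterm : ∀ j ∈ Finset.Ico (a + 1) (b + 1), |Z j| ≤ γn / αn * M := by
      intro j hj
      rw [Finset.mem_Ico] at hj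
      obtain ⟨k, rfl⟩ : ∃ k, j = k + 1 := ⟨j - 1, by omega⟩
      rw [hZ]
      exact hXCabs k
    have hsb : |C b - C a| ≤ ((b - a : ℕ) : ℝ) * (γn / αn * M) := by
      rw [hsum]
      calc |∑ j ∈ Finset.Ico (a + 1) (b + 1), Z j|
          ≤ ∑ j ∈ Finset.Ico (a + 1) (b + 1), |Z j| := Finset.abs_sum_le_sum_abs _ _
        _ ≤ (Finset.Ico (a + 1) (b + 1)).card • (γn / αn * M) :=
            Finset.sum_le_card_nsmul _ _ _ hterm
        _ = ((b - a : ℕ) : ℝ) * (γn / αn * M) := by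
            rw [Nat.card_Ico, nsmul_eq_mul]
            congr 2
            omega
    have hba : ((b - a : ℕ) : ℝ) ≤ αn * (t - s) + 2 := by
      rw [Nat.cast_sub hab]
      have h1 : (b : ℝ) ≤ αn * t := Nat.floor_le (by nlinarith)
      have h2 : αn * s < (a : ℝ) + 1 := Nat.lt_floor_add_one _
      nlinarith
    have hfin : |(1 / γn) * C b - (1 / γn) * C a| = (1 / γn) * |C b - C a| := by
      rw [← mul_sub, abs_mul, abs_of_pos (by positivity : (0:ℝ) < 1 / γn)]
    rw [hfin]
    calc (1 / γn) * |C b - C a|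
        ≤ (1 / γn) * (((b - a : ℕ) : ℝ) * (γn / αn * M)) :=
          mul_le_mul_of_nonneg_left hsb (by positivity)
      _ = ((b - a : ℕ) : ℝ) / αn * M := by field_simp
      _ ≤ (t - s + 2 / αn) * M := by
          apply mul_le_mul_of_nonneg_right _ hM0
          rw [div_le_iff₀ hα]
          have he2 : (t - s + 2 / αn) * αn = αn * (t - s) + 2 := by field_simp
          linarith
  refine ⟨fun s t hs hst => le_trans (le_abs_self _) (habs s t hs hst), ?_⟩
  -- second part: the modulus bound
  intro δ hδ N hN
  set v := ⌈(N : ℝ) / (2 * δ)⌉₊ with hv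
  have hNpos : (0:ℝ) < N := by exact_mod_cast hN
  have hvpos : 0 < v := by
    rw [hv]
    exact Nat.ceil_pos.mpr (by positivity)
  have hvR : (0:ℝ) < (v : ℝ) := by exact_mod_cast hvpos
  set L := (N : ℝ) / v with hL
  have hLpos : 0 < L := by positivity
  have hL2 : L ≤ 2 * δ := by
    rw [hL, div_le_iff₀ hvR]
    have := Nat.le_ceil ((N : ℝ) / (2 * δ))
    rw [← hv] at this
    rw [div_le_iff₀ (by positivity : (0:ℝ) < 2 * δ)] at this
    linarith [this]
  refine ⟨v, fun i => (i : ℝ) * L, hvpos, by simp, ?_, ?_, ?_, ?_⟩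
  · show ((v : ℕ) : ℝ) * L = N
    rw [hL]; field_simp
  · intro i hi
    show ((i : ℕ) : ℝ) * L < ((i + 1 : ℕ) : ℝ) * L
    push_cast
    have : ((i : ℝ) + 1) * L = (i : ℝ) * L + L := by ring
    linarith
  · intro i hi
    have hv2 : 2 ≤ v := by omega
    have hx : 1 < (N : ℝ) / (2 * δ) := by
      by_contra hcon
      push_neg at hcon
      have : v ≤ 1 := by
        rw [hv]
        exact Nat.ceil_le.mpr (by exact_mod_cast hcon)
      omega
    have hδN : 2 * δ < (N : ℝ) := by
      rw [lt_div_iff₀ (by positivity : (0:ℝ) < 2 * δ)] at hx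
      linarith
    have hvlt : (v : ℝ) < (N : ℝ) / (2 * δ) + 1 := by
      rw [hv]
      exact Nat.ceil_lt_add_one (by positivity)
    have hδv : δ * (v : ℝ) < N := by
      have : δ * (v : ℝ) < δ * ((N : ℝ) / (2 * δ) + 1) :=
        mul_lt_mul_of_pos_left hvlt hδ
      have heq : δ * ((N : ℝ) / (2 * δ) + 1) = (N : ℝ) / 2 + δ := by
        field_simp
      nlinarith
    show δ < ((i + 1 : ℕ) : ℝ) * L - ((i : ℕ) : ℝ) * L
    push_cast
    rw [show ((i : ℝ) + 1) * L - (i : ℝ) * L = L by ring]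
    rw [hL, lt_div_iff₀ hvR]
    exact hδv
  · intro i hi s hs u hu
    simp only [Set.mem_Ico] at hs hu
    push_cast at hs hu
    have hgap : ((i : ℝ) + 1) * L - (i : ℝ) * L = L := by ring
    have htsnn : 0 ≤ (i : ℝ) * L := by positivity
    have hs0 : 0 ≤ s := le_trans htsnn hs.1
    have hu0 : 0 ≤ u := le_trans htsnn hu.1
    have hus : u - s < L := by linarith [hu.2, hs.1, hgap]
    have hsu : s - u < L := by linarith [hs.2, hu.1, hgap]
    have hRHS : ∀ x y : ℝ, 0 ≤ x → x < y → y - x < L →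
        |(1 / γn) * C (⌊αn * y⌋₊) - (1 / γn) * C (⌊αn * x⌋₊)| ≤ 2 * (δ + 1 / αn) * M := by
      intro x y hx hxy hyx
      refine le_trans (habs x y hx hxy) ?_
      apply mul_le_mul_of_nonneg_right _ hM0
      have hyx2 : y - x < 2 * δ := lt_of_lt_of_le hyx hL2
      have he3 : 2 * (δ + 1 / αn) = 2 * δ + 2 / αn := by ring
      rw [he3]
      linarith
    rcases lt_trichotomy s u with h | h | h
    · exact hRHS s u hs0 h hus
    · rw [h]
      simp only [sub_self, abs_zero]
      exact mul_nonneg (by positivity) hM0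
    · rw [abs_sub_comm]
      exact hRHS u s hu0 h hsu
end

section
/- Suppose (hₙ) is a sequence of continuous excursions hₙ : [0,xₙ] → [0,∞) and x,h with hₙ → h uniformly (after reparametrization to [0,1]) and xₙ → x; let T_{hₙ}, T_h denote the associated rooted real trees with mass measures μₙ, μ. If t > 0 satisfies Leb{s ∈ [0,x] : h(s) = t} = 0, then μₙ(B(ρₙ,t)) = Leb{s ∈ [0,xₙ] : hₙ(s) ≤ t} → Leb{s ∈ [0,x] : h(s) ≤ t} = μ(B(ρ,t)). -/
open MeasureTheory Set Filter
open scoped ENNReal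

lemma vol_scale19 (c : ℝ) (hc : 0 < c) (P : ℝ → Prop) :
    volume {s ∈ Icc 0 c | P s} = ENNReal.ofReal c * volume {u ∈ Icc (0:ℝ) 1 | P (c * u)} := by
  have hset : {u ∈ Icc (0:ℝ) 1 | P (c * u)} = (c * ·) ⁻¹' {s ∈ Icc 0 c | P s} := by
    ext u
    simp only [mem_sep_iff, mem_preimage, mem_Icc]
    constructor
    · rintro ⟨⟨h1, h2⟩, h3⟩
      exact ⟨⟨mul_nonneg hc.le h1, by nlinarith⟩, h3⟩
    · rintro ⟨⟨h1, h2⟩, h3⟩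
      refine ⟨⟨?_, ?_⟩, h3⟩
      · by_contra hu
        push_neg at hu
        nlinarith [mul_neg_of_pos_of_neg hc hu]
      · by_contra hu
        push_neg at hu
        nlinarith
  rw [hset, Real.volume_preimage_mul_left hc.ne', abs_inv, abs_of_pos hc, ← mul_assoc,
    ← ENNReal.ofReal_mul hc.le, mul_inv_cancel₀ hc.ne', ENNReal.ofReal_one, one_mul]

lemma meas_sub19 (f : ℝ → ℝ) (a b : ℝ) (hf : ContinuousOn f (Icc a b)) (r : ℝ) :
    MeasurableSet {s ∈ Icc a b | f s ≤ r} := by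
  have : {s ∈ Icc a b | f s ≤ r} = Icc a b ∩ f ⁻¹' Iic r := rfl
  rw [this]
  exact (hf.preimage_isClosed_of_isClosed isClosed_Icc isClosed_Iic).measurableSet

lemma ball_mass19 {T : Type*} [MetricSpace T] [MeasurableSpace T] [BorelSpace T]
    (q : ℝ → T) (hq : Measurable q) (ρ : T) (c : ℝ) (f : ℝ → ℝ)
    (hd : ∀ s ∈ Icc 0 c, dist ρ (q s) = f s) (t : ℝ) :
    Measure.map q (volume.restrict (Icc 0 c)) (Metric.closedBall ρ t)
      = volume {s ∈ Icc 0 c | f s ≤ t} := by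
  rw [Measure.map_apply hq measurableSet_closedBall,
    Measure.restrict_apply (hq measurableSet_closedBall)]
  congr 1
  ext s
  simp only [mem_inter_iff, mem_preimage, Metric.mem_closedBall, mem_sep_iff]
  constructor
  · rintro ⟨hb, hs⟩
    refine ⟨hs, ?_⟩
    rw [← hd s hs, dist_comm]
    exact hb
  · rintro ⟨hs, hf'⟩
    exact ⟨by rw [dist_comm, hd s hs]; exact hf', hs⟩

lemma key_conv19 (G : ℝ → ℝ) (g : ℕ → ℝ → ℝ) (t : ℝ)
    (hGmeas : ∀ r : ℝ, MeasurableSet {u ∈ Icc (0:ℝ) 1 | G u ≤ r})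
    (ε : ℕ → ℝ) (hε : Tendsto ε atTop (nhds 0))
    (hbound : ∀ n, ∀ u ∈ Icc (0:ℝ) 1, |g n u - G u| ≤ ε n)
    (hnull : volume {u ∈ Icc (0:ℝ) 1 | G u = t} = 0) :
    Tendsto (fun n => volume {u ∈ Icc (0:ℝ) 1 | g n u ≤ t}) atTop
      (nhds (volume {u ∈ Icc (0:ℝ) 1 | G u ≤ t})) := by
  set L := volume {u ∈ Icc (0:ℝ) 1 | G u ≤ t} with hL
  have hdiv : ∀ i j : ℕ, i ≤ j → (1:ℝ) / (j + 1) ≤ 1 / (i + 1) := by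
    intro i j hij
    apply one_div_le_one_div_of_le (by positivity)
    have : (i:ℝ) ≤ j := Nat.cast_le.mpr hij
    linarith
  rw [tendsto_order]
  constructor
  · intro a ha
    have hlt : volume {u ∈ Icc (0:ℝ) 1 | G u < t} = L := by
      refine le_antisymm (measure_mono fun u ⟨hu, h1⟩ => ⟨hu, h1.le⟩) ?_
      have hsub : {u ∈ Icc (0:ℝ) 1 | G u ≤ t} ⊆
          {u ∈ Icc (0:ℝ) 1 | G u < t} ∪ {u ∈ Icc (0:ℝ) 1 | G u = t} := by
        rintro u ⟨hu, h1⟩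
        rcases lt_or_eq_of_le h1 with h2 | h2
        · exact Or.inl ⟨hu, h2⟩
        · exact Or.inr ⟨hu, h2⟩
      calc L ≤ volume ({u ∈ Icc (0:ℝ) 1 | G u < t} ∪ {u ∈ Icc (0:ℝ) 1 | G u = t}) :=
            measure_mono hsub
        _ ≤ volume {u ∈ Icc (0:ℝ) 1 | G u < t} + volume {u ∈ Icc (0:ℝ) 1 | G u = t} :=
            measure_union_le _ _
        _ = volume {u ∈ Icc (0:ℝ) 1 | G u < t} := by rw [hnull, add_zero]
    have hunion : (⋃ k : ℕ, {u ∈ Icc (0:ℝ) 1 | G u ≤ t - 1 / (k + 1)}) =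
        {u ∈ Icc (0:ℝ) 1 | G u < t} := by
      ext u
      simp only [mem_iUnion, mem_sep_iff]
      constructor
      · rintro ⟨k, hu, hk⟩
        refine ⟨hu, lt_of_le_of_lt hk ?_⟩
        have : (0:ℝ) < 1 / (k + 1) := by positivity
        linarith
      · rintro ⟨hu, hlt'⟩
        obtain ⟨k, hk⟩ := exists_nat_one_div_lt (sub_pos.mpr hlt')
        refine ⟨k, hu, ?_⟩
        linarith
    have hmono : Monotone fun k : ℕ => {u ∈ Icc (0:ℝ) 1 | G u ≤ t - 1 / (k + 1)} := by
      intro i j hij u ⟨hu, h1⟩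
      exact ⟨hu, h1.trans (by linarith [hdiv i j hij])⟩
    have hsup : L = ⨆ k : ℕ, volume {u ∈ Icc (0:ℝ) 1 | G u ≤ t - 1 / (k + 1)} := by
      rw [← hlt, ← hunion]
      exact hmono.measure_iUnion
    rw [hsup] at ha
    obtain ⟨k, hk⟩ := lt_iSup_iff.mp ha
    have hev : ∀ᶠ n in atTop, ε n < 1 / (k + 1) :=
      hε.eventually_lt_const (by positivity)
    filter_upwards [hev] with n hn
    refine lt_of_lt_of_le hk (measure_mono ?_)
    rintro u ⟨hu, h1⟩
    refine ⟨hu, ?_⟩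
    have h2 : g n u - G u ≤ ε n := (abs_le.mp (hbound n u hu)).2
    linarith
  · intro b hb
    have hinter : (⋂ k : ℕ, {u ∈ Icc (0:ℝ) 1 | G u ≤ t + 1 / (k + 1)}) =
        {u ∈ Icc (0:ℝ) 1 | G u ≤ t} := by
      ext u
      simp only [mem_iInter, mem_sep_iff]
      constructor
      · intro hk
        refine ⟨(hk 0).1, ?_⟩
        by_contra hgt
        push_neg at hgt
        obtain ⟨k, hklt⟩ := exists_nat_one_div_lt (sub_pos.mpr hgt)
        have := (hk k).2
        linarith
      · rintro ⟨hu, h1⟩ k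
        have : (0:ℝ) < 1 / (k + 1) := by positivity
        exact ⟨hu, by linarith⟩
    have hanti : Antitone fun k : ℕ => {u ∈ Icc (0:ℝ) 1 | G u ≤ t + 1 / (k + 1)} := by
      intro i j hij u ⟨hu, h1⟩
      exact ⟨hu, h1.trans (by linarith [hdiv i j hij])⟩
    have hinf : L = ⨅ k : ℕ, volume {u ∈ Icc (0:ℝ) 1 | G u ≤ t + 1 / (k + 1)} := by
      rw [hL, ← hinter]
      refine hanti.measure_iInter (fun k => (hGmeas _).nullMeasurableSet) ⟨0, ?_⟩
      exact ne_top_of_le_ne_top (by simp [Real.volume_Icc]) (measure_mono fun u hu => hu.1)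
    rw [hinf] at hb
    obtain ⟨k, hk⟩ := iInf_lt_iff.mp hb
    have hev : ∀ᶠ n in atTop, ε n < 1 / (k + 1) :=
      hε.eventually_lt_const (by positivity)
    filter_upwards [hev] with n hn
    refine lt_of_le_of_lt (measure_mono ?_) hk
    rintro u ⟨hu, h1⟩
    refine ⟨hu, ?_⟩
    have h2 : G u - g n u ≤ ε n := by
      have := (abs_le.mp (hbound n u hu)).1
      linarith
    linarith

/-- If excursions `hₙ` converge to `h` uniformly after reparametrization to `[0,1]` (with
lengths `xₙ → x`), and the level set `{h = t}` is Lebesgue-null, then the ball masses of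
the coded real trees converge: `μₙ(B(ρₙ,t)) = Leb{hₙ ≤ t} → Leb{h ≤ t} = μ(B(ρ,t))`. -/
theorem stmt19
    (x : ℝ) (hx : 0 < x) (xn : ℕ → ℝ) (hxn : ∀ n, 0 < xn n)
    (h : ℝ → ℝ) (hn : ℕ → ℝ → ℝ)
    (hcont : ContinuousOn h (Icc 0 x)) (h0 : h 0 = 0) (hxx : h x = 0)
    (hpos : ∀ t ∈ Ioo 0 x, 0 < h t)
    (hncont : ∀ n, ContinuousOn (hn n) (Icc 0 (xn n)))
    (hn0 : ∀ n, hn n 0 = 0) (hnx : ∀ n, hn n (xn n) = 0)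
    (hnpos : ∀ n, ∀ t ∈ Ioo 0 (xn n), 0 < hn n t)
    (hxconv : Tendsto xn atTop (nhds x))
    (hunif : Tendsto (fun n => ⨆ u : Icc (0:ℝ) 1, |hn n (xn n * u) - h (x * u)|)
      atTop (nhds 0))
    -- the coded real trees, presented via their quotient maps and pushforward measures
    (Tn : ℕ → Type*) [∀ n, MetricSpace (Tn n)] [∀ n, MeasurableSpace (Tn n)]
    [∀ n, BorelSpace (Tn n)]
    (qn : ∀ n, ℝ → Tn n) (hqn : ∀ n, Measurable (qn n))
    (ρn : ∀ n, Tn n) (hρn : ∀ n, ρn n = qn n 0)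
    (hdn : ∀ n, ∀ s ∈ Icc 0 (xn n), dist (ρn n) (qn n s) = hn n s)
    (μn : ∀ n, Measure (Tn n))
    (hμn : ∀ n, μn n = Measure.map (qn n) (volume.restrict (Icc 0 (xn n))))
    (T : Type*) [MetricSpace T] [MeasurableSpace T] [BorelSpace T]
    (q : ℝ → T) (hq : Measurable q)
    (ρ : T) (hρ : ρ = q 0)
    (hd : ∀ s ∈ Icc 0 x, dist ρ (q s) = h s)
    (μ : Measure T)
    (hμ : μ = Measure.map q (volume.restrict (Icc 0 x)))
    (t : ℝ) (ht : 0 < t)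
    (hlevel : volume {s ∈ Icc 0 x | h s = t} = 0) :
    (∀ n, μn n (Metric.closedBall (ρn n) t) = volume {s ∈ Icc 0 (xn n) | hn n s ≤ t}) ∧
    μ (Metric.closedBall ρ t) = volume {s ∈ Icc 0 x | h s ≤ t} ∧
    Tendsto (fun n => μn n (Metric.closedBall (ρn n) t)) atTop
      (nhds (μ (Metric.closedBall ρ t))) := by
  have key1 : ∀ n, μn n (Metric.closedBall (ρn n) t)
      = volume {s ∈ Icc 0 (xn n) | hn n s ≤ t} := by
    intro n
    rw [hμn n]
    exact ball_mass19 _ (hqn n) _ _ _ (hdn n) t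
  have key2 : μ (Metric.closedBall ρ t) = volume {s ∈ Icc 0 x | h s ≤ t} := by
    rw [hμ]
    exact ball_mass19 _ hq _ _ _ hd t
  refine ⟨key1, key2, ?_⟩
  simp only [key1, key2]
  -- continuity of the reparametrized excursions
  have hGcont : ContinuousOn (fun u => h (x * u)) (Icc 0 1) :=
    hcont.comp (continuous_mul_left x).continuousOn
      (fun u hu => ⟨mul_nonneg hx.le hu.1, mul_le_of_le_one_right hx.le hu.2⟩)
  have hgcont : ∀ n, ContinuousOn (fun u => hn n (xn n * u)) (Icc 0 1) := fun n =>
    (hncont n).comp (continuous_mul_left (xn n)).continuousOn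
      (fun u hu => ⟨mul_nonneg (hxn n).le hu.1, mul_le_of_le_one_right (hxn n).le hu.2⟩)
  have hbound : ∀ n, ∀ u ∈ Icc (0:ℝ) 1,
      |hn n (xn n * u) - h (x * u)| ≤ ⨆ u : Icc (0:ℝ) 1, |hn n (xn n * u) - h (x * u)| := by
    intro n u hu
    have hc : ContinuousOn (fun u => |hn n (xn n * u) - h (x * u)|) (Icc 0 1) :=
      ((hgcont n).sub hGcont).abs
    have hbdd : BddAbove (Set.range fun u : Icc (0:ℝ) 1 =>
        |hn n (xn n * (u:ℝ)) - h (x * (u:ℝ))|) := by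
      have hb := (isCompact_Icc.image_of_continuousOn hc).bddAbove
      rwa [image_eq_range] at hb
    exact le_ciSup hbdd ⟨u, hu⟩
  have hGmeas : ∀ r : ℝ, MeasurableSet {u ∈ Icc (0:ℝ) 1 | h (x * u) ≤ r} :=
    fun r => meas_sub19 _ 0 1 hGcont r
  have hnull' : volume {u ∈ Icc (0:ℝ) 1 | h (x * u) = t} = 0 := by
    have h1 := vol_scale19 x hx (fun s => h s = t)
    rw [hlevel] at h1
    rcases mul_eq_zero.mp h1.symm with h' | h'
    · exact absurd h' (by simp [ENNReal.ofReal_eq_zero, hx, not_le])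
    · exact h'
  have hconv := key_conv19 (fun u => h (x * u)) (fun n u => hn n (xn n * u)) t hGmeas
    (fun n => ⨆ u : Icc (0:ℝ) 1, |hn n (xn n * u) - h (x * u)|) hunif hbound hnull'
  have hscale : ∀ n, volume {s ∈ Icc 0 (xn n) | hn n s ≤ t}
      = ENNReal.ofReal (xn n) * volume {u ∈ Icc (0:ℝ) 1 | hn n (xn n * u) ≤ t} := fun n =>
    vol_scale19 (xn n) (hxn n) (fun s => hn n s ≤ t)
  have hscale0 : volume {s ∈ Icc 0 x | h s ≤ t}
      = ENNReal.ofReal x * volume {u ∈ Icc (0:ℝ) 1 | h (x * u) ≤ t} :=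
    vol_scale19 x hx (fun s => h s ≤ t)
  simp only [hscale, hscale0]
  exact ENNReal.Tendsto.mul (ENNReal.tendsto_ofReal hxconv)
    (Or.inl (by simp [ENNReal.ofReal_eq_zero, hx, not_le]))
    hconv (Or.inr ENNReal.ofReal_ne_top)
end
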